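/- Let L be a reduced 1-compact compactly generated multiplicative lattice whose zero-divisor graph Γᵐ(L) has finite clique number. Then the set {x* : x ∈ L, x ≠ 0} satisfies the ascending chain condition. -/

import Mathlib

variable {α : Type*}

/-- Iterated product `a^n` in a multiplicative lattice (with `a^0 = ⊤`). -/
def mpow [CompleteLattice α] (mul : α → α → α) (a : α) : ℕ → α
  | 0 => ⊤
  | n + 1 => mul a (mpow mul a n)

/-- `mul` makes the complete lattice `α` into a multiplicative lattice. -/
def IsMulLattice [CompleteLattice α] (mul : α → α → α) : Prop :=
  (∀ a b : α, mul a b = mul b a) ∧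
  (∀ a b c : α, mul (mul a b) c = mul a (mul b c)) ∧
  (∀ (a : α) (s : Set α), mul a (sSup s) = ⨆ b ∈ s, mul a b) ∧
  (∀ a b : α, mul a b ≤ a ⊓ b) ∧
  (∀ a : α, mul a ⊤ = a)

/-- The multiplicative lattice is reduced: the only nilpotent element is `⊥`. -/
def LatReduced [CompleteLattice α] (mul : α → α → α) : Prop :=
  ∀ (a : α) (n : ℕ), mpow mul a (n + 1) = ⊥ → a = ⊥

/-- `a* = sup {x | x·a = 0}`. -/
def starAnn [CompleteLattice α] (mul : α → α → α) (a : α) : α :=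
  sSup {x : α | mul x a = ⊥}

/-- A prime element of a multiplicative lattice. -/
def IsPrimeElt [CompleteLattice α] (mul : α → α → α) (p : α) : Prop :=
  p ≠ ⊤ ∧ ∀ a b : α, mul a b ≤ p → a ≤ p ∨ b ≤ p

/-- The zero-divisor graph `Γᵐ(L)` of a multiplicative lattice. -/
def zdg [CompleteLattice α] (mul : α → α → α) : SimpleGraph α where
  Adj a b := a ≠ b ∧ a ≠ ⊥ ∧ b ≠ ⊥ ∧ mul a b = ⊥ ∧ mul b a = ⊥
  symm := ⟨fun a b h => ⟨h.1.symm, h.2.2.1, h.2.1, h.2.2.2.2, h.2.2.2.1⟩⟩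
  loopless := ⟨fun a h => h.1 rfl⟩

/-- `Clique(Γᵐ(L)) < ∞`. -/
def CliqueBounded [CompleteLattice α] (mul : α → α → α) : Prop :=
  ∃ N : ℕ, ∀ s : Finset α, (zdg mul).IsClique ↑s → s.card ≤ N

section Helpers

variable [CompleteLattice α] {mul : α → α → α}

lemma mul_mono_right (hL : IsMulLattice mul) (c : α) {a b : α} (h : a ≤ b) :
    mul c a ≤ mul c b := by
  have hs : sSup ({a, b} : Set α) = b := by rw [sSup_pair, sup_eq_right.mpr h]
  have hd := hL.2.2.1 c ({a, b} : Set α)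
  rw [hs] at hd
  rw [hd]
  exact le_biSup (fun x => mul c x) (Set.mem_insert a {b})

lemma mul_mono_left (hL : IsMulLattice mul) (c : α) {a b : α} (h : a ≤ b) :
    mul a c ≤ mul b c := by
  rw [hL.1 a c, hL.1 b c]; exact mul_mono_right hL c h

lemma starAnn_mul_self (hL : IsMulLattice mul) (a : α) :
    mul (starAnn mul a) a = ⊥ := by
  rw [hL.1, starAnn, hL.2.2.1]
  refine le_antisymm (iSup₂_le fun b hb => ?_) bot_le
  rw [hL.1]; exact le_of_eq hb

lemma sq_bot (hL : IsMulLattice mul) (hred : LatReduced mul) {a : α}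
    (h : mul a a = ⊥) : a = ⊥ := by
  refine hred a 1 ?_
  show mul a (mul a ⊤) = ⊥
  rw [hL.2.2.2.2, h]

end Helpers

theorem annihilators_acc [CompleteLattice α] [IsCompactlyGenerated α]
    (mul : α → α → α) (hL : IsMulLattice mul) (hred : LatReduced mul)
    (htop : IsCompactElement (⊤ : α))
    (hclique : CliqueBounded mul) :
    ∀ f : ℕ →o α, (∀ n : ℕ, ∃ x : α, x ≠ ⊥ ∧ f n = starAnn mul x) →
      ∃ n : ℕ, ∀ m : ℕ, n ≤ m → f m = f n := by
  intro f hf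
  classical
  by_contra hcon
  push_neg at hcon
  have H : ∀ n, ∃ m, n ≤ m ∧ f n < f m := by
    intro n
    obtain ⟨m, hm, hne⟩ := hcon n
    exact ⟨m, hm, lt_of_le_of_ne (f.mono hm) fun e => hne e.symm⟩
  choose mfn hm hfm using H
  set g : ℕ → ℕ := fun k => Nat.rec 0 (fun _ p => mfn p) k with hg
  have gstep : ∀ k, g k ≤ g (k + 1) := fun k => hm (g k)
  have gmono : Monotone g := monotone_nat_of_le_succ gstep
  have fstrict : StrictMono (fun k => f (g k)) :=
    strictMono_nat_of_lt_succ fun k => hfm (g k)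
  choose x hxne hxs using fun k => hf (g k)
  set c : ℕ → α := fun k => mul (starAnn mul (x (k + 1))) (x k) with hc
  have cbot : ∀ k, c k ≠ ⊥ := by
    intro k h
    have h1 : starAnn mul (x (k + 1)) ≤ starAnn mul (x k) := le_sSup h
    have h2 : f (g (k + 1)) ≤ f (g k) := by rw [hxs (k + 1), hxs k]; exact h1
    exact (fstrict (Nat.lt_succ_self k)).not_ge h2
  have key : ∀ i j, i < j → mul (c i) (c j) = ⊥ := by
    intro i j hij
    have h1 : mul (starAnn mul (x (i + 1))) (x j) = ⊥ := by
      have hle : starAnn mul (x (i + 1)) ≤ starAnn mul (x j) := by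
        rw [← hxs (i + 1), ← hxs j]; exact f.mono (gmono hij)
      refine le_bot_iff.mp ?_
      calc mul (starAnn mul (x (i + 1))) (x j)
          ≤ mul (starAnn mul (x j)) (x j) := mul_mono_left hL _ hle
        _ = ⊥ := starAnn_mul_self hL _
    refine le_bot_iff.mp ?_
    calc mul (c i) (c j)
        ≤ mul (c i) (x j) :=
          mul_mono_right hL _ ((hL.2.2.2.1 _ _).trans inf_le_right)
      _ = mul (starAnn mul (x (i + 1))) (mul (x i) (x j)) := hL.2.1 _ _ _
      _ ≤ mul (starAnn mul (x (i + 1))) (x j) :=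
          mul_mono_right hL _ ((hL.2.2.2.1 _ _).trans inf_le_right)
      _ = ⊥ := h1
  have cmul : ∀ i j, i ≠ j → mul (c i) (c j) = ⊥ := by
    intro i j hij
    rcases lt_or_gt_of_ne hij with h | h
    · exact key i j h
    · rw [hL.1]; exact key j i h
  have cinj : Function.Injective c := by
    intro i j hij
    by_contra hne
    have h1 := cmul i j hne
    rw [hij] at h1
    exact cbot j (sq_bot hL hred h1)
  obtain ⟨N, hN⟩ := hclique
  have hclq : (zdg mul).IsClique ↑((Finset.range (N + 1)).image c) := by
    intro a ha b hb hab
    simp only [Finset.coe_image, Set.mem_image, Finset.mem_coe] at ha hb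
    obtain ⟨i, -, rfl⟩ := ha
    obtain ⟨j, -, rfl⟩ := hb
    have hij : i ≠ j := fun e => hab (by rw [e])
    exact ⟨hab, cbot i, cbot j, cmul i j hij, cmul j i hij.symm⟩
  have hcard := hN _ hclq
  rw [Finset.card_image_of_injective _ cinj, Finset.card_range] at hcard
  omega
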